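/- Let q : [0, ∞) → ℝᵈ be Lipschitz with each component nonnegative, and suppose at every point t where q is differentiable, the drift satisfies Σᵢ wᵢ(q(t)) qᵢ(t) q̇ᵢ(t) ≤ −ε Σᵢ wᵢ(q(t)) qᵢ(t), where each wᵢ(q) ≥ 1. Define L(t) = −∫ₜ^∞ e^{τ−t} Σᵢ wᵢ(q(τ)) qᵢ(τ) q̇ᵢ(τ) dτ (assumed finite). If L(0) < ∞ and ε, δ₁ > 0, then there exists T ≤ L(0)/(ε δ₁) + δ₁ such that Σᵢ qᵢ(T) ≤ δ₁. -/

import Mathlib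

open MeasureTheory

theorem fluid_draining
    (d : ℕ) (ε δ₁ : ℝ) (hε : 0 < ε) (hδ : 0 < δ₁)
    (q : ℝ → (Fin d → ℝ)) (K : NNReal)
    (hq_lip : LipschitzWith K q)
    (hq_nonneg : ∀ t ∈ Set.Ici (0:ℝ), ∀ i, 0 ≤ q t i)
    (w : (Fin d → ℝ) → Fin d → ℝ)
    (hw : ∀ x i, 1 ≤ w x i)
    (hdrift : ∀ t ∈ Set.Ici (0:ℝ), DifferentiableAt ℝ q t →
      ∑ i, w (q t) i * q t i * deriv (fun τ => q τ i) t ≤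
        -ε * ∑ i, w (q t) i * q t i)
    (L : ℝ → ℝ)
    (hLdef : ∀ t, L t =
      -∫ τ in Set.Ioi t, Real.exp (τ - t) *
        ∑ i, w (q τ) i * q τ i * deriv (fun σ => q σ i) τ)
    (hLint : ∀ t, IntegrableOn
      (fun τ => Real.exp (τ - t) *
        ∑ i, w (q τ) i * q τ i * deriv (fun σ => q σ i) τ) (Set.Ioi t)) :
    ∃ T : ℝ, 0 ≤ T ∧ T ≤ L 0 / (ε * δ₁) + δ₁ ∧ ∑ i, q T i ≤ δ₁ := by
  by_contra hcon
  push_neg at hcon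
  set B : ℝ := L 0 / (ε * δ₁) + δ₁ with hB
  -- notation
  set G : ℝ → ℝ := fun τ => Real.exp (τ - 0) *
      ∑ i, w (q τ) i * q τ i * deriv (fun σ => q σ i) τ with hG
  set S : ℝ → ℝ := fun τ => ∑ i, q τ i with hS
  have hScont : Continuous S := by
    apply continuous_finset_sum
    intro i _
    exact (continuous_apply i).comp hq_lip.continuous
  set h : ℝ → ℝ := fun τ => ε * (Real.exp τ * S τ) with hh
  have hhcont : Continuous h := by fun_prop
  have hGint : IntegrableOn G (Set.Ioi 0) := hLint 0
  -- a.e. bounds on Ioi 0 : 0 ≤ h ≤ -G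
  have hdiff : ∀ᵐ τ : ℝ, DifferentiableAt ℝ q τ := hq_lip.ae_differentiableAt
  have hae : ∀ᵐ τ ∂(volume.restrict (Set.Ioi (0:ℝ))), 0 ≤ h τ ∧ h τ ≤ -G τ := by
    have hmem : ∀ᵐ τ ∂(volume.restrict (Set.Ioi (0:ℝ))), τ ∈ Set.Ioi (0:ℝ) :=
      ae_restrict_mem measurableSet_Ioi
    filter_upwards [hmem, hdiff.filter_mono (ae_mono Measure.restrict_le_self)]
      with τ hτ hdτ
    have hτ0 : (0:ℝ) ≤ τ := le_of_lt hτ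
    have hqn : ∀ i, 0 ≤ q τ i := hq_nonneg τ hτ0
    have hSnn : 0 ≤ S τ := Finset.sum_nonneg fun i _ => hqn i
    have hSw : S τ ≤ ∑ i, w (q τ) i * q τ i := by
      apply Finset.sum_le_sum
      intro i _
      nlinarith [hw (q τ) i, hqn i]
    have hdr := hdrift τ hτ0 hdτ
    have hexp : (0:ℝ) < Real.exp τ := Real.exp_pos τ
    constructor
    · positivity
    · have h1 : ε * S τ ≤ ε * ∑ i, w (q τ) i * q τ i :=
        mul_le_mul_of_nonneg_left hSw (le_of_lt hε)
      have h2 : ∑ i, w (q τ) i * q τ i * deriv (fun σ => q σ i) τ ≤ -(ε * S τ) := by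
        have := hdr
        nlinarith
      have h3 : G τ ≤ Real.exp (τ - 0) * (-(ε * S τ)) := by
        rw [hG]
        exact mul_le_mul_of_nonneg_left h2 (le_of_lt (Real.exp_pos _))
      rw [sub_zero] at h3
      show ε * (Real.exp τ * S τ) ≤ -G τ
      nlinarith
  have hhint : IntegrableOn h (Set.Ioi 0) := by
    apply Integrable.mono' hGint.neg hhcont.aestronglyMeasurable
    filter_upwards [hae] with τ ⟨h1, h2⟩
    rwa [Real.norm_of_nonneg h1]
  -- ∫ h ≤ L 0
  have hInt_le : ∫ τ in Set.Ioi (0:ℝ), h τ ≤ L 0 := by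
    have := integral_mono_ae hhint hGint.neg (by filter_upwards [hae] with τ hτ; exact hτ.2)
    rw [hLdef 0, ← integral_neg]
    exact this
  -- B is positive-ish: εδ₁ B = L 0 + εδ₁²  (need L 0 ≥ 0 only implicitly)
  have hεδ : (0:ℝ) < ε * δ₁ := mul_pos hε hδ
  -- lower bound via Ioc 0 B
  have hB_nonneg : 0 ≤ B := by
    have hpos : 0 ≤ ∫ τ in Set.Ioi (0:ℝ), h τ :=
      integral_nonneg_of_ae (by filter_upwards [hae] with τ hτ; exact hτ.1)
    have hL0 : 0 ≤ L 0 := le_trans hpos hInt_le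
    have : 0 ≤ L 0 / (ε * δ₁) := div_nonneg hL0 hεδ.le
    rw [hB]; linarith
  have hsub : Set.Ioc (0:ℝ) B ⊆ Set.Ioi 0 := Set.Ioc_subset_Ioi_self
  have hioc_le : ∫ τ in Set.Ioc (0:ℝ) B, h τ ≤ ∫ τ in Set.Ioi (0:ℝ), h τ := by
    apply setIntegral_mono_set hhint
    · filter_upwards [hae] with τ hτ; exact hτ.1
    · exact HasSubset.Subset.eventuallyLE hsub
  have hlow : ∫ τ in Set.Ioc (0:ℝ) B, (ε * δ₁) * Real.exp τ ≤
      ∫ τ in Set.Ioc (0:ℝ) B, h τ := by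
    apply setIntegral_mono_on
    · exact (Continuous.integrableOn_Ioc (by fun_prop))
    · exact hhint.mono_set hsub
    · exact measurableSet_Ioc
    · intro τ hτ
      have hτB : 0 ≤ τ ∧ τ ≤ B := ⟨le_of_lt hτ.1, hτ.2⟩
      have hSτ : δ₁ < S τ := hcon τ hτB.1 hτB.2
      have hexp : (0:ℝ) < Real.exp τ := Real.exp_pos τ
      show ε * δ₁ * Real.exp τ ≤ ε * (Real.exp τ * S τ)
      nlinarith [mul_lt_mul_of_pos_left hSτ (mul_pos hε hexp)]
  have hval : ∫ τ in Set.Ioc (0:ℝ) B, (ε * δ₁) * Real.exp τ =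
      (ε * δ₁) * (Real.exp B - 1) := by
    rw [← intervalIntegral.integral_of_le hB_nonneg, intervalIntegral.integral_const_mul,
      integral_exp, Real.exp_zero]
  have hexpB : B + 1 ≤ Real.exp B := Real.add_one_le_exp B
  have hfinal : (ε * δ₁) * B ≤ (ε * δ₁) * (Real.exp B - 1) := by nlinarith
  have hBval : (ε * δ₁) * B = L 0 + ε * δ₁ * δ₁ := by
    field_simp [hB]
    rw [hB, mul_add, mul_div_cancel₀ _ hεδ.ne']
    ring
  nlinarith [hInt_le, hioc_le, hlow, hval]
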